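/- arXiv:2508.06940 — 2 statements merged into one kernel-verified Lean document; each statement's English description precedes it below -/
import Mathlib

section
/- Let q ≥ 2, 0 < ρ < 1, and x₀ > 0. Then the function y ↦ R_q(ρ,x₀,y) is strictly increasing on (0, 1/x₀]: for all y₁, y₂ with 0 < y₁ < y₂ ≤ 1/x₀ it holds that R_q(ρ,x₀,y₁) < R_q(ρ,x₀,y₂). -/
/-- `N_q(ρ,x,y) := (y/(y+1))(1+ρx)^q + (1/(y+1))(1−ρyx)^q` (real powers). -/
noncomputable def Nq (q ρ x y : ℝ) : ℝ :=
  (y / (y + 1)) * (1 + ρ * x) ^ q + (1 / (y + 1)) * (1 - ρ * y * x) ^ q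

/-- `R_q(ρ,x,y) := ln N_q(ρ,x,y) / ln N_q(1,x,y)`. -/
noncomputable def Rq (q ρ x y : ℝ) : ℝ :=
  Real.log (Nq q ρ x y) / Real.log (Nq q 1 x y)

namespace Stmt12

noncomputable def DD (q y t : ℝ) : ℝ := y * (1 + t) ^ q + (1 - y * t) ^ q
noncomputable def RR (q y t : ℝ) : ℝ := (1 + t) ^ (q - 1) - (1 - y * t) ^ (q - 1)
noncomputable def HH (q y t : ℝ) : ℝ :=
  (q - 1) * ((1 + t) ^ (q - 2) + y * (1 - y * t) ^ (q - 2)) / RR q y t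
    - q * y * RR q y t / DD q y t

variable {q ρ x y t : ℝ}

lemma Nq_eq_DD (q y t : ℝ) : Nq q 1 t y = DD q y t / (y + 1) := by
  unfold Nq DD
  simp only [one_mul]
  ring

lemma Nq_rho_eq (q ρ x y : ℝ) : Nq q ρ x y = Nq q 1 (ρ * x) y := by
  unfold Nq
  rw [show (1:ℝ) * (ρ * x) = ρ * x from by ring,
      show (1:ℝ) * y * (ρ * x) = ρ * y * x from by ring]

lemma DD_pos (hy : 0 < y) (ht : 0 ≤ t) (hb : 0 ≤ 1 - y * t) : 0 < DD q y t :=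
  add_pos_of_pos_of_nonneg (mul_pos hy (Real.rpow_pos_of_pos (by linarith) q))
    (Real.rpow_nonneg hb q)

lemma RR_pos (hq : 2 ≤ q) (hy : 0 < y) (ht : 0 < t) (hb : 0 ≤ 1 - y * t) :
    0 < RR q y t := by
  have h1 : (1 - y * t : ℝ) < 1 + t := by nlinarith
  exact sub_pos.2 (Real.rpow_lt_rpow hb h1 (by linarith))

lemma DD_gt (hq : 2 ≤ q) (hy : 0 < y) (ht : 0 < t) (hb : 0 ≤ 1 - y * t) :
    1 + y < DD q y t := by
  have h1 : 1 + q * t < (1 + t) ^ q :=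
    one_add_mul_self_lt_rpow_one_add (by linarith) (ne_of_gt ht) (by linarith)
  have h2 : 1 + q * (-(y * t)) ≤ (1 + -(y * t)) ^ q :=
    one_add_mul_self_le_rpow_one_add (by linarith) (by linarith)
  rw [show (1 + -(y * t) : ℝ) = 1 - y * t from by ring] at h2
  unfold DD
  nlinarith [mul_lt_mul_of_pos_left h1 hy]

lemma logNq_pos (hq : 2 ≤ q) (hy : 0 < y) (ht : 0 < t) (hb : 0 ≤ 1 - y * t) :
    0 < Real.log (Nq q 1 t y) := by
  apply Real.log_pos
  rw [Nq_eq_DD, lt_div_iff₀ (by linarith : (0:ℝ) < y + 1)]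
  have := DD_gt hq hy ht hb (q := q)
  linarith

lemma logNq_zero (hy : 0 < y) : Real.log (Nq q 1 0 y) = 0 := by
  have : Nq q 1 0 y = 1 := by
    unfold Nq
    norm_num
    field_simp
  rw [this, Real.log_one]

lemma hasDerivAt_logNq (hy : 0 < y) (ht : 0 ≤ t) (hb : y * t < 1) :
    HasDerivAt (fun s => Real.log (Nq q 1 s y)) (q * y * RR q y t / DD q y t) t := by
  have ha : (0:ℝ) < 1 + t := by linarith
  have hbb : (0:ℝ) < 1 - y * t := by linarith
  have hDpos : 0 < DD q y t := DD_pos hy ht hbb.le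
  have hy1 : (0:ℝ) < y + 1 := by linarith
  have h1 : HasDerivAt (fun s : ℝ => 1 + s) 1 t := by
    simpa using (hasDerivAt_id t).const_add 1
  have hA : HasDerivAt (fun s : ℝ => (1 + s) ^ q) (1 * q * (1 + t) ^ (q - 1)) t :=
    h1.rpow_const (Or.inl ha.ne')
  have h2 : HasDerivAt (fun s : ℝ => 1 - y * s) (-(y * 1)) t :=
    ((hasDerivAt_id t).const_mul y).const_sub 1
  have hB : HasDerivAt (fun s : ℝ => (1 - y * s) ^ q) (-(y * 1) * q * (1 - y * t) ^ (q - 1)) t :=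
    h2.rpow_const (Or.inl hbb.ne')
  have hDD : HasDerivAt (fun s : ℝ => (y * (1 + s) ^ q + (1 - y * s) ^ q) / (y + 1))
      ((y * (1 * q * (1 + t) ^ (q - 1)) + -(y * 1) * q * (1 - y * t) ^ (q - 1)) / (y + 1)) t :=
    ((hA.const_mul y).add hB).div_const (y + 1)
  have hNqpos : (0:ℝ) < (y * (1 + t) ^ q + (1 - y * t) ^ q) / (y + 1) := by
    apply div_pos _ hy1
    have := hDpos; unfold DD at this; exact this
  have hlog := hDD.log hNqpos.ne'
  have hfun : (fun s => Real.log (Nq q 1 s y))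
      = fun s => Real.log ((y * (1 + s) ^ q + (1 - y * s) ^ q) / (y + 1)) := by
    funext s
    rw [Nq_eq_DD, DD]
  rw [hfun]
  convert hlog using 1
  unfold RR DD
  field_simp
  ring

lemma hasDerivAt_logRD (hq : 2 ≤ q) (hy : 0 < y) (ht : 0 < t) (hb : y * t < 1) :
    HasDerivAt (fun s => Real.log (RR q y s) - Real.log (DD q y s)) (HH q y t) t := by
  have ha : (0:ℝ) < 1 + t := by linarith
  have hbb : (0:ℝ) < 1 - y * t := by linarith
  have hDpos : 0 < DD q y t := DD_pos hy ht.le hbb.le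
  have hRpos : 0 < RR q y t := RR_pos hq hy ht hbb.le
  have h1 : HasDerivAt (fun s : ℝ => 1 + s) 1 t := by
    simpa using (hasDerivAt_id t).const_add 1
  have hA : HasDerivAt (fun s : ℝ => (1 + s) ^ (q-1)) (1 * (q-1) * (1 + t) ^ (q - 1 - 1)) t :=
    h1.rpow_const (Or.inl ha.ne')
  have h2 : HasDerivAt (fun s : ℝ => 1 - y * s) (-(y * 1)) t :=
    ((hasDerivAt_id t).const_mul y).const_sub 1
  have hB : HasDerivAt (fun s : ℝ => (1 - y * s) ^ (q-1))
      (-(y * 1) * (q-1) * (1 - y * t) ^ (q - 1 - 1)) t :=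
    h2.rpow_const (Or.inl hbb.ne')
  have hR : HasDerivAt (fun s : ℝ => RR q y s)
      (1 * (q-1) * (1 + t) ^ (q - 1 - 1) - -(y * 1) * (q-1) * (1 - y * t) ^ (q - 1 - 1)) t := by
    unfold RR; exact hA.sub hB
  have hAq : HasDerivAt (fun s : ℝ => (1 + s) ^ q) (1 * q * (1 + t) ^ (q - 1)) t :=
    h1.rpow_const (Or.inl ha.ne')
  have hBq : HasDerivAt (fun s : ℝ => (1 - y * s) ^ q) (-(y * 1) * q * (1 - y * t) ^ (q - 1)) t :=
    h2.rpow_const (Or.inl hbb.ne')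
  have hD : HasDerivAt (fun s : ℝ => DD q y s)
      (y * (1 * q * (1 + t) ^ (q - 1)) + -(y * 1) * q * (1 - y * t) ^ (q - 1)) t := by
    unfold DD; exact (hAq.const_mul y).add hBq
  have := (hR.log hRpos.ne').sub (hD.log hDpos.ne')
  refine this.congr_deriv ?_
  rw [show q - 1 - 1 = q - 2 from by ring]
  have hR' : (1 + t) ^ (q - 1) - (1 - t * y) ^ (q - 1) ≠ 0 := by rw [mul_comm t y]; exact hRpos.ne'
  have hD' : y * (1 + t) ^ q + (1 - t * y) ^ q ≠ 0 := by rw [mul_comm t y]; exact hDpos.ne'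
  unfold HH RR DD
  field_simp
  ring

lemma bern_C3 {p a b : ℝ} (hp : 1 ≤ p) (ha : 0 < a) (hb : 0 < b) :
    (a - p * (a - b)) * a ^ p ≤ a * b ^ p := by
  have hs : (-1 : ℝ) ≤ b / a - 1 := by
    have : 0 ≤ b / a := div_nonneg hb.le ha.le
    linarith
  have h := one_add_mul_self_le_rpow_one_add hs hp
  rw [show (1 + (b / a - 1) : ℝ) = b / a from by ring, Real.div_rpow hb.le ha.le] at h
  have h2 : (a - p * (a - b)) / a ≤ b ^ p / a ^ p := by
    have : (a - p * (a - b)) / a = 1 + p * (b / a - 1) := by field_simp; ring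
    rw [this]; exact h
  rw [div_le_div_iff₀ ha (Real.rpow_pos_of_pos ha p)] at h2
  linarith [h2]

lemma bern_C2 {p a b : ℝ} (hp : 1 ≤ p) (hb : 0 < b) (hba : b ≤ a) :
    b ^ p * (b + p * (a - b)) ≤ a ^ p * b := by
  have ha : 0 < a := lt_of_lt_of_le hb hba
  have hs : (-1 : ℝ) ≤ a / b - 1 := by
    have : 0 ≤ a / b := div_nonneg ha.le hb.le
    linarith
  have h := one_add_mul_self_le_rpow_one_add hs hp
  rw [show (1 + (a / b - 1) : ℝ) = a / b from by ring, Real.div_rpow ha.le hb.le] at h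
  have h2 : (b + p * (a - b)) / b ≤ a ^ p / b ^ p := by
    have : (b + p * (a - b)) / b = 1 + p * (a / b - 1) := by field_simp
    rw [this]; exact h
  rw [div_le_div_iff₀ hb (Real.rpow_pos_of_pos hb p)] at h2
  linarith [h2]

lemma HH_deriv_neg (hq : 2 ≤ q) (ht : 0 < t) {z : ℝ} (hz : 0 < z) (hzt : z * t < 1) :
    ∃ V, HasDerivAt (fun w => HH q w t) V z ∧ V < 0 := by
  have ha : (0:ℝ) < 1 + t := by linarith
  have hbz : (0:ℝ) < 1 - z * t := by linarith
  have hR0 : 0 < (1 + t) ^ (q-1) - (1 - z * t) ^ (q-1) := by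
    have := RR_pos hq hz ht hbz.le (q := q); unfold RR at this; exact this
  have hD0 : 0 < z * (1 + t) ^ q + (1 - z * t) ^ q := by
    have := DD_pos hz ht.le hbz.le (q := q); unfold DD at this; exact this
  have hX : (0:ℝ) < (1 + t) ^ (q-2) := Real.rpow_pos_of_pos ha _
  have hW : (0:ℝ) < (1 - z * t) ^ (q-2-1) := Real.rpow_pos_of_pos hbz _
  have h0 : HasDerivAt (fun w : ℝ => 1 - w * t) (-(1 * t)) z :=
    ((hasDerivAt_id z).mul_const t).const_sub 1
  have hZ : HasDerivAt (fun w : ℝ => (1 - w * t) ^ (q-2))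
      (-(1 * t) * (q-2) * (1 - z * t) ^ (q-2-1)) z := h0.rpow_const (Or.inl hbz.ne')
  have hZ1 : HasDerivAt (fun w : ℝ => (1 - w * t) ^ (q-1))
      (-(1 * t) * (q-1) * (1 - z * t) ^ (q-1-1)) z := h0.rpow_const (Or.inl hbz.ne')
  have hZq : HasDerivAt (fun w : ℝ => (1 - w * t) ^ q)
      (-(1 * t) * q * (1 - z * t) ^ (q-1)) z := h0.rpow_const (Or.inl hbz.ne')
  have hS : HasDerivAt (fun w : ℝ => (1 + t) ^ (q-2) + w * (1 - w * t) ^ (q-2))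
      (1 * (1 - z * t) ^ (q-2) + z * (-(1 * t) * (q-2) * (1 - z * t) ^ (q-2-1))) z :=
    ((hasDerivAt_id z).mul hZ).const_add _
  have hSS := hS.const_mul (q-1)
  have hRz : HasDerivAt (fun w : ℝ => (1 + t) ^ (q-1) - (1 - w * t) ^ (q-1))
      (-(-(1 * t) * (q-1) * (1 - z * t) ^ (q-1-1))) z := hZ1.const_sub _
  have hT1 := hSS.div hRz hR0.ne'
  have hDz : HasDerivAt (fun w : ℝ => w * (1 + t) ^ q + (1 - w * t) ^ q)
      (1 * (1 + t) ^ q + -(1 * t) * q * (1 - z * t) ^ (q-1)) z :=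
    ((hasDerivAt_id z).mul_const _).add hZq
  have hQW : HasDerivAt (fun w : ℝ => q * w * ((1 + t) ^ (q-1) - (1 - w * t) ^ (q-1)))
      (q * 1 * ((1 + t) ^ (q-1) - (1 - z * t) ^ (q-1))
        + q * z * (-(-(1 * t) * (q-1) * (1 - z * t) ^ (q-1-1)))) z :=
    ((hasDerivAt_id z).const_mul q).mul hRz
  have hT2 := hQW.div hDz hD0.ne'
  have hH := hT1.sub hT2
  have hfe : (fun w => HH q w t) = fun w =>
      (q - 1) * ((1 + t) ^ (q - 2) + w * (1 - w * t) ^ (q - 2))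
        / ((1 + t) ^ (q - 1) - (1 - w * t) ^ (q - 1))
      - q * w * ((1 + t) ^ (q - 1) - (1 - w * t) ^ (q - 1))
        / (w * (1 + t) ^ q + (1 - w * t) ^ q) := by
    funext w; rw [HH, RR, DD]
  have hHH : HasDerivAt (fun w => HH q w t) _ z := hH.congr_of_eventuallyEq (Filter.Eventually.of_forall fun w => congrFun hfe w)
  refine ⟨_, hHH, ?_⟩
  have e1 : q - 1 - 1 = q - 2 := by ring
  have eW : (1 - z * t) ^ (q-2) = (1 - z * t) ^ (q-2-1) * (1 - z * t) := by
    rw [← Real.rpow_add_one hbz.ne' (q-2-1)]; congr 1; ring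
  have eA1 : (1 + t) ^ (q-1) = (1 + t) ^ (q-2) * (1 + t) := by
    rw [← Real.rpow_add_one ha.ne' (q-2)]; congr 1; ring
  have eB1 : (1 - z * t) ^ (q-1) = (1 - z * t) ^ (q-2) * (1 - z * t) := by
    rw [← Real.rpow_add_one hbz.ne' (q-2)]; congr 1; ring
  have eAq : (1 + t) ^ q = (1 + t) ^ (q-1) * (1 + t) := by
    rw [← Real.rpow_add_one ha.ne' (q-1)]; congr 1; ring
  have eBq : (1 - z * t) ^ q = (1 - z * t) ^ (q-1) * (1 - z * t) := by
    rw [← Real.rpow_add_one hbz.ne' (q-1)]; congr 1; ring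
  have hC3' : (1 - (q-2)*t - (q-1)*t*z) * (1 + t) ^ (q-2)
      ≤ (1 - z*t) * (1 - z*t) * (1 - z*t) ^ (q-2-1) := by
    have h := bern_C3 (p := q-1) (a := 1+t) (b := 1-z*t) (by linarith) ha hbz
    rw [eA1, eB1, eW] at h
    nlinarith [h, ha]
  have hC2' : ((1 - z*t) ^ (q-2-1) * (1 - z*t) * (1 - z*t)) * ((1-z*t) + (q-1)*((1+t)-(1-z*t)))
      ≤ ((1 + t) ^ (q-2) * (1+t)) * (1-z*t) := by
    have h := bern_C2 (p := q-1) (a := 1+t) (b := 1-z*t) (by linarith) hbz (by nlinarith)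
    rw [eA1, eB1, eW] at h
    nlinarith [h]
  set X := (1 + t) ^ (q-2) with hXdef
  set W := (1 - z * t) ^ (q-2-1) with hWdef
  have hN1 : ((q-1) * (1 * (1 - z * t) ^ (q-2) + z * (-(1 * t) * (q-2) * W)))
        * ((1 + t) ^ (q-1) - (1 - z * t) ^ (q-1))
      - ((q-1) * (X + z * (1 - z * t) ^ (q-2))) * (-(-(1 * t) * (q-1) * (1 - z * t) ^ (q-1-1)))
      ≤ 0 := by
    rw [e1, eA1, eB1, eW]
    have heq : (q - 1) * (1 * (W * (1 - z * t)) + z * (-(1 * t) * (q - 2) * W)) *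
          (X * (1 + t) - W * (1 - z * t) * (1 - z * t)) -
        (q - 1) * (X + z * (W * (1 - z * t))) * (-(-(1 * t) * (q - 1) * (W * (1 - z * t))))
        = (q-1) * W * ((1 - (q-2)*t - (q-1)*t*z) * X
            - (1 - z*t) * (1 - z*t) * W) := by ring
    rw [heq]
    apply mul_nonpos_of_nonneg_of_nonpos
    · exact mul_nonneg (by linarith) hW.le
    · linarith [hC3']
  have hN2 : 0 < (q * 1 * ((1 + t) ^ (q-1) - (1 - z * t) ^ (q-1))
        + q * z * (-(-(1 * t) * (q-1) * (1 - z * t) ^ (q-1-1))))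
      * (z * (1 + t) ^ q + (1 - z * t) ^ q)
      - q * z * ((1 + t) ^ (q-1) - (1 - z * t) ^ (q-1))
        * (1 * (1 + t) ^ q + -(1 * t) * q * (1 - z * t) ^ (q-1)) := by
    rw [e1, eAq, eBq, eA1, eB1, eW]
    have heq : (q * 1 * (X * (1 + t) - W * (1 - z * t) * (1 - z * t)) +
          q * z * (-(-(1 * t) * (q - 1) * (W * (1 - z * t))))) *
          (z * (X * (1 + t) * (1 + t)) + W * (1 - z * t) * (1 - z * t) * (1 - z * t)) -
        q * z * (X * (1 + t) - W * (1 - z * t) * (1 - z * t)) *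
          (1 * (X * (1 + t) * (1 + t)) + -(1 * t) * q * (W * (1 - z * t) * (1 - z * t)))
        = q * (W * (1 - z*t)) * (((1+t) * X) * ((1-z*t) + (q-1)*t*z*(1+z))
            - (1-z*t)*(1-z*t)*(1-z*t) * W) := by ring
    rw [heq]
    have hbr : 0 < ((1+t) * X) * ((1-z*t) + (q-1)*t*z*(1+z))
        - (1-z*t)*(1-z*t)*(1-z*t) * W := by
      nlinarith [hC2', mul_pos (mul_pos ha hX) (mul_pos (mul_pos (mul_pos ht hz) (by linarith : (0:ℝ) < 1 + z)) (by linarith : (0:ℝ) < q - 1)), hbz, hW]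
    positivity
  apply sub_neg.mpr
  calc ((q - 1) * (1 * (1 - z * t) ^ (q - 2) + z * (-(1 * t) * (q - 2) * (1 - z * t) ^ (q - 2 - 1))) *
            ((1 + t) ^ (q - 1) - (1 - z * t) ^ (q - 1)) -
          (q - 1) * ((1 + t) ^ (q - 2) + z * (1 - z * t) ^ (q - 2)) *
            (-(-(1 * t) * (q - 1) * (1 - z * t) ^ (q - 1 - 1)))) /
          ((1 + t) ^ (q - 1) - (1 - z * t) ^ (q - 1)) ^ 2
      ≤ 0 := by
        apply div_nonpos_of_nonpos_of_nonneg _ (sq_nonneg _)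
        exact hN1
    _ < ((q * 1 * ((1 + t) ^ (q - 1) - (1 - z * t) ^ (q - 1)) +
          q * z * (-(-(1 * t) * (q - 1) * (1 - z * t) ^ (q - 1 - 1)))) *
            (z * (1 + t) ^ q + (1 - z * t) ^ q) -
          q * z * ((1 + t) ^ (q - 1) - (1 - z * t) ^ (q - 1)) *
            (1 * (1 + t) ^ q + -(1 * t) * q * (1 - z * t) ^ (q - 1))) /
          (z * (1 + t) ^ q + (1 - z * t) ^ q) ^ 2 := by
        apply div_pos hN2 (by positivity)

lemma HH_lt (hq : 2 ≤ q) (ht : 0 < t) {y₁ y₂ : ℝ} (hy₁ : 0 < y₁) (h12 : y₁ < y₂)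
    (h2 : y₂ * t < 1) : HH q y₂ t < HH q y₁ t := by
  have hcont : ContinuousOn (fun w => HH q w t) (Set.Icc y₁ y₂) := by
    intro z hz
    obtain ⟨V, hV, _⟩ := HH_deriv_neg hq ht (lt_of_lt_of_le hy₁ hz.1)
      (lt_of_le_of_lt (by nlinarith [hz.2] : z * t ≤ y₂ * t) h2 |>.trans_le le_rfl)
    exact hV.continuousAt.continuousWithinAt
  have hderiv : ∀ z ∈ interior (Set.Icc y₁ y₂), deriv (fun w => HH q w t) z < 0 := by
    intro z hz
    rw [interior_Icc] at hz
    obtain ⟨V, hV, hVneg⟩ := HH_deriv_neg hq ht (hy₁.trans hz.1)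
      (lt_of_lt_of_le (by nlinarith [hz.2] : z * t < y₂ * t) h2.le)
    rw [hV.deriv]
    exact hVneg
  exact strictAntiOn_of_deriv_neg (convex_Icc y₁ y₂) hcont hderiv
    ⟨le_rfl, h12.le⟩ ⟨h12.le, le_rfl⟩ h12

lemma w_strictAnti (hq : 2 ≤ q) {y₁ y₂ : ℝ} (hy₁ : 0 < y₁) (h12 : y₁ < y₂) :
    StrictAntiOn (fun s => (Real.log (RR q y₂ s) - Real.log (DD q y₂ s))
      - (Real.log (RR q y₁ s) - Real.log (DD q y₁ s))) (Set.Ioo 0 (1/y₂)) := by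
  have hy₂ : 0 < y₂ := hy₁.trans h12
  have hder : ∀ s ∈ Set.Ioo (0:ℝ) (1/y₂),
      HasDerivAt (fun s => (Real.log (RR q y₂ s) - Real.log (DD q y₂ s))
        - (Real.log (RR q y₁ s) - Real.log (DD q y₁ s))) (HH q y₂ s - HH q y₁ s) s := by
    intro s hs
    have hs2 : y₂ * s < 1 := by
      rw [Set.mem_Ioo, lt_div_iff₀ hy₂] at hs
      nlinarith [hs.2]
    have hs1 : y₁ * s < 1 := by nlinarith [hs.1]
    exact (hasDerivAt_logRD hq hy₂ hs.1 hs2).sub (hasDerivAt_logRD hq hy₁ hs.1 hs1)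
  apply strictAntiOn_of_deriv_neg (convex_Ioo _ _)
  · exact fun s hs => ((hder s hs).continuousAt).continuousWithinAt
  · intro s hs
    rw [isOpen_Ioo.interior_eq] at hs
    rw [(hder s hs).deriv]
    have hs2 : y₂ * s < 1 := by
      rw [Set.mem_Ioo, lt_div_iff₀ hy₂] at hs
      nlinarith [hs.2]
    have := HH_lt hq hs.1 hy₁ h12 hs2
    linarith



lemma expand_log (hq0 : 0 < q) {y r : ℝ} (hq : 2 ≤ q) (hy : 0 < y) (hr : 0 < r)
    (hyr : y * r < 1) :
    Real.log (q * y * RR q y r / DD q y r)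
      = Real.log (q * y) + (Real.log (RR q y r) - Real.log (DD q y r)) := by
  have hR : 0 < RR q y r := RR_pos hq hy hr (by linarith)
  have hD : 0 < DD q y r := DD_pos hy hr.le (by linarith)
  rw [Real.log_div (by positivity) hD.ne', Real.log_mul (by positivity) hR.ne']
  ring

end Stmt12

set_option maxHeartbeats 2000000 in
open Stmt12 in
theorem stmt12 (q ρ x₀ : ℝ) (hq : 2 ≤ q) (hρ0 : 0 < ρ) (hρ1 : ρ < 1) (hx₀ : 0 < x₀) :
    ∀ y₁ y₂ : ℝ, 0 < y₁ → y₁ < y₂ → y₂ ≤ 1 / x₀ →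
      Rq q ρ x₀ y₁ < Rq q ρ x₀ y₂ := by
  intro y₁ y₂ hy₁ h12 h2v
  have hy₂ : 0 < y₂ := hy₁.trans h12
  have hq0 : (0:ℝ) < q := by linarith
  have hu : 0 < ρ * x₀ := mul_pos hρ0 hx₀
  have huv : ρ * x₀ < x₀ := by nlinarith
  have hvy2 : y₂ * x₀ ≤ 1 := by
    rw [le_div_iff₀ hx₀] at h2v; linarith
  have hvy1 : y₁ * x₀ < 1 := lt_of_lt_of_le (by nlinarith) hvy2
  have Lu1 : 0 < Real.log (Nq q 1 (ρ * x₀) y₁) := logNq_pos hq hy₁ hu (by nlinarith)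
  have Lv1 : 0 < Real.log (Nq q 1 x₀ y₁) := logNq_pos hq hy₁ hx₀ (by linarith)
  have Lu2 : 0 < Real.log (Nq q 1 (ρ * x₀) y₂) := logNq_pos hq hy₂ hu (by nlinarith)
  have Lv2 : 0 < Real.log (Nq q 1 x₀ y₂) := logNq_pos hq hy₂ hx₀ (by linarith)
  unfold Rq
  rw [Nq_rho_eq q ρ x₀ y₁, Nq_rho_eq q ρ x₀ y₂]
  rw [div_lt_div_iff₀ Lv1 Lv2]
  -- goal: log(Nq q 1 u y₁) * log(Nq q 1 x₀ y₂) < log(Nq q 1 u y₂) * log(Nq q 1 x₀ y₁)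
  have hφanti : StrictAntiOn (fun t => Real.log (Nq q 1 t y₂) / Real.log (Nq q 1 t y₁))
      (Set.Icc (ρ * x₀) x₀) := by
    apply strictAntiOn_of_deriv_neg (convex_Icc _ _)
    · apply ContinuousOn.div
      · have hfun : (fun t => Real.log (Nq q 1 t y₂))
            = fun t => Real.log ((y₂ * (1 + t) ^ q + (1 - y₂ * t) ^ q) / (y₂ + 1)) := by
          funext t; rw [Nq_eq_DD, DD]
        rw [hfun]
        apply ContinuousOn.log
        · apply Continuous.continuousOn
          apply Continuous.div_const
          exact (continuous_const.mul ((continuous_const.add continuous_id).rpow_const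
              (fun _ => Or.inr hq0.le))).add
            ((continuous_const.sub (continuous_const.mul continuous_id)).rpow_const
              (fun _ => Or.inr hq0.le))
        · intro t ht
          have h1 : 0 < DD q y₂ t := DD_pos hy₂ (le_trans hu.le ht.1) (by nlinarith [ht.2])
          have h2 : 0 < DD q y₂ t / (y₂ + 1) := div_pos h1 (by linarith)
          unfold DD at h2; exact ne_of_gt h2
      · have hfun : (fun t => Real.log (Nq q 1 t y₁))
            = fun t => Real.log ((y₁ * (1 + t) ^ q + (1 - y₁ * t) ^ q) / (y₁ + 1)) := by
          funext t; rw [Nq_eq_DD, DD]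
        rw [hfun]
        apply ContinuousOn.log
        · apply Continuous.continuousOn
          apply Continuous.div_const
          exact (continuous_const.mul ((continuous_const.add continuous_id).rpow_const
              (fun _ => Or.inr hq0.le))).add
            ((continuous_const.sub (continuous_const.mul continuous_id)).rpow_const
              (fun _ => Or.inr hq0.le))
        · intro t ht
          have h1 : 0 < DD q y₁ t := DD_pos hy₁ (le_trans hu.le ht.1) (by nlinarith [ht.2])
          have h2 : 0 < DD q y₁ t / (y₁ + 1) := div_pos h1 (by linarith)
          unfold DD at h2; exact ne_of_gt h2
      · intro t ht
        exact (logNq_pos hq hy₁ (lt_of_lt_of_le hu ht.1) (by nlinarith [ht.2])).ne'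
    · intro s hs
      rw [interior_Icc] at hs
      obtain ⟨hsu, hsv⟩ := hs
      have hs0 : 0 < s := hu.trans hsu
      have hsy2 : y₂ * s < 1 := by nlinarith
      have hsy1 : y₁ * s < 1 := by nlinarith
      have hf2 := hasDerivAt_logNq (q := q) hy₂ hs0.le hsy2
      have hf1 := hasDerivAt_logNq (q := q) hy₁ hs0.le hsy1
      have hf1pos : 0 < Real.log (Nq q 1 s y₁) := logNq_pos hq hy₁ hs0 (by linarith)
      have hf2pos : 0 < Real.log (Nq q 1 s y₂) := logNq_pos hq hy₂ hs0 (by linarith)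
      have hφ := hf2.div hf1 hf1pos.ne'
      rw [(show HasDerivAt (fun t => Real.log (Nq q 1 t y₂) / Real.log (Nq q 1 t y₁)) _ s from hφ).deriv]
      apply div_neg_of_neg_of_pos _ (pow_pos hf1pos 2)
      -- Cauchy MVT on [0,s]
      obtain ⟨ξ, hξ, hMVT⟩ := exists_ratio_hasDerivAt_eq_ratio_slope
        (fun r => Real.log (Nq q 1 r y₂)) (fun r => q * y₂ * RR q y₂ r / DD q y₂ r) hs0
        (fun r hr => (hasDerivAt_logNq hy₂ hr.1 (by nlinarith [hr.2])).continuousAt.continuousWithinAt)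
        (fun r hr => hasDerivAt_logNq hy₂ hr.1.le (by nlinarith [hr.2]))
        (fun r => Real.log (Nq q 1 r y₁)) (fun r => q * y₁ * RR q y₁ r / DD q y₁ r)
        (fun r hr => (hasDerivAt_logNq hy₁ hr.1 (by nlinarith [hr.2])).continuousAt.continuousWithinAt)
        (fun r hr => hasDerivAt_logNq hy₁ hr.1.le (by nlinarith [hr.2]))
      rw [logNq_zero hy₂, logNq_zero hy₁, sub_zero, sub_zero] at hMVT
      obtain ⟨hξ0, hξs⟩ := hξ
      have hξy2 : y₂ * ξ < 1 := by nlinarith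
      have hξy1 : y₁ * ξ < 1 := by nlinarith
      have hmemξ : ξ ∈ Set.Ioo (0:ℝ) (1 / y₂) := ⟨hξ0, by rw [lt_div_iff₀ hy₂]; linarith⟩
      have hmems : s ∈ Set.Ioo (0:ℝ) (1 / y₂) := ⟨hs0, by rw [lt_div_iff₀ hy₂]; linarith⟩
      have hw : (Real.log (RR q y₂ s) - Real.log (DD q y₂ s))
            - (Real.log (RR q y₁ s) - Real.log (DD q y₁ s))
          < (Real.log (RR q y₂ ξ) - Real.log (DD q y₂ ξ))
            - (Real.log (RR q y₁ ξ) - Real.log (DD q y₁ ξ)) :=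
        w_strictAnti hq hy₁ h12 hmemξ hmems hξs
      have dAs : 0 < q * y₂ * RR q y₂ s / DD q y₂ s :=
        div_pos (mul_pos (mul_pos hq0 hy₂) (RR_pos hq hy₂ hs0 (by linarith)))
          (DD_pos hy₂ hs0.le (by linarith))
      have dBs : 0 < q * y₁ * RR q y₁ s / DD q y₁ s :=
        div_pos (mul_pos (mul_pos hq0 hy₁) (RR_pos hq hy₁ hs0 (by linarith)))
          (DD_pos hy₁ hs0.le (by linarith))
      have dCξ : 0 < q * y₂ * RR q y₂ ξ / DD q y₂ ξ :=
        div_pos (mul_pos (mul_pos hq0 hy₂) (RR_pos hq hy₂ hξ0 (by linarith)))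
          (DD_pos hy₂ hξ0.le (by linarith))
      have dDξ : 0 < q * y₁ * RR q y₁ ξ / DD q y₁ ξ :=
        div_pos (mul_pos (mul_pos hq0 hy₁) (RR_pos hq hy₁ hξ0 (by linarith)))
          (DD_pos hy₁ hξ0.le (by linarith))
      have hfinal : (q * y₂ * RR q y₂ s / DD q y₂ s) * (q * y₁ * RR q y₁ ξ / DD q y₁ ξ)
          < (q * y₂ * RR q y₂ ξ / DD q y₂ ξ) * (q * y₁ * RR q y₁ s / DD q y₁ s) := by
        apply (Real.log_lt_log_iff (mul_pos dAs dDξ) (mul_pos dCξ dBs)).mp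
        rw [Real.log_mul dAs.ne' dDξ.ne', Real.log_mul dCξ.ne' dBs.ne',
          expand_log hq0 hq hy₂ hs0 hsy2, expand_log hq0 hq hy₁ hξ0 hξy1,
          expand_log hq0 hq hy₂ hξ0 hξy2, expand_log hq0 hq hy₁ hs0 hsy1]
        linarith
      nlinarith [mul_lt_mul_of_pos_left hfinal hf1pos, hMVT, dDξ, hf1pos, hf2pos, dBs,
        mul_pos hf2pos dBs, mul_pos dDξ dBs]
  have hlt : Real.log (Nq q 1 x₀ y₂) / Real.log (Nq q 1 x₀ y₁)
      < Real.log (Nq q 1 (ρ * x₀) y₂) / Real.log (Nq q 1 (ρ * x₀) y₁) :=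
    hφanti ⟨le_rfl, huv.le⟩ ⟨huv.le, le_rfl⟩ huv
  rw [div_lt_div_iff₀ Lv1 Lu1] at hlt
  nlinarith [hlt]
end

section
/- Let q ≥ 2 and 0 < ρ < 1. Then the function x ↦ R_q(ρ,x,1/x) is strictly increasing on (0,∞): for all 0 < x₁ < x₂ it holds that R_q(ρ,x₁,1/x₁) < R_q(ρ,x₂,1/x₂). -/
open Real

lemma auxP (q d : ℝ) (hq : 2 ≤ q) (hd : 0 < d) {t : ℝ} (ht : 0 ≤ t) :
    d ^ q ≤ (d + t) ^ q + q * (q - 1) * (t ^ 2 * (d + t) ^ (q - 2))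
      - q * (t * (d + t) ^ (q - 1)) := by
  set p : ℝ → ℝ := fun t => (d + t) ^ q + q * (q - 1) * (t ^ 2 * (d + t) ^ (q - 2))
      - q * (t * (d + t) ^ (q - 1)) with hp
  have key : ∀ s ∈ Set.Ici (0:ℝ), ∀ r ∈ Set.Ici (0:ℝ), s ≤ r → p s ≤ p r := by
    have hder : ∀ s : ℝ, 0 < d + s → HasDerivAt p
        (1 * q * (d + s) ^ (q - 1)
          + q * (q - 1) * ((2 * s ^ 1) * (d + s) ^ (q - 2)
              + s ^ 2 * (1 * (q - 2) * (d + s) ^ (q - 2 - 1)))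
          - q * (1 * (d + s) ^ (q - 1) + s * (1 * (q - 1) * (d + s) ^ (q - 1 - 1)))) s := by
      intro s hs
      have hbase : HasDerivAt (fun s : ℝ => d + s) 1 s := (hasDerivAt_id s).const_add d
      have h1 : HasDerivAt (fun s : ℝ => (d + s) ^ q) (1 * q * (d + s) ^ (q - 1)) s :=
        hbase.rpow_const (Or.inl hs.ne')
      have h2 : HasDerivAt (fun s : ℝ => s ^ 2 * (d + s) ^ (q - 2))
          ((2 * s ^ 1) * (d + s) ^ (q - 2) + s ^ 2 * (1 * (q - 2) * (d + s) ^ (q - 2 - 1))) s :=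
        (hasDerivAt_pow 2 s).mul (hbase.rpow_const (Or.inl hs.ne'))
      have h3 : HasDerivAt (fun s : ℝ => s * (d + s) ^ (q - 1))
          (1 * (d + s) ^ (q - 1) + s * (1 * (q - 1) * (d + s) ^ (q - 1 - 1))) s :=
        (hasDerivAt_id s).mul (hbase.rpow_const (Or.inl hs.ne'))
      exact (h1.add (h2.const_mul (q * (q - 1)))).sub (h3.const_mul q)
    have hmono : MonotoneOn p (Set.Ici (0:ℝ)) := by
      apply monotoneOn_of_deriv_nonneg (convex_Ici 0)
      · intro s hs
        have : (0:ℝ) < d + s := by have := hs; simp at this; linarith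
        exact (hder s this).continuousAt.continuousWithinAt
      · intro s hs
        rw [interior_Ici] at hs
        have : (0:ℝ) < d + s := by have := hs; simp at this; linarith
        exact ((hder s this).differentiableAt).differentiableWithinAt
      · intro s hs
        rw [interior_Ici] at hs
        have hs0 : (0:ℝ) < s := hs
        have hds : (0:ℝ) < d + s := by linarith
        rw [(hder s hds).deriv]
        obtain ⟨e, he⟩ : ∃ e, q - 2 - 1 = e := ⟨_, rfl⟩
        have hB : (0:ℝ) ≤ (d + s) ^ e := rpow_nonneg hds.le _
        have f1 : (d + s) ^ (q - 1) = (d + s) ^ e * (d + s) * (d + s) := by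
          rw [show q - 1 = e + 1 + 1 by rw [← he]; ring, rpow_add hds, rpow_add hds, rpow_one]
        have f2 : (d + s) ^ (q - 2) = (d + s) ^ e * (d + s) := by
          rw [show q - 2 = e + 1 by rw [← he]; ring, rpow_add hds, rpow_one]
        have f3 : (d + s) ^ (q - 1 - 1) = (d + s) ^ e * (d + s) := by
          rw [show q - 1 - 1 = e + 1 by rw [← he]; ring, rpow_add hds, rpow_one]
        rw [show q - 2 - 1 = e from he, f1, f2, f3]
        set B := (d + s) ^ e
        have hrw : 1 * q * (B * (d + s) * (d + s))
              + q * (q - 1) * (2 * s ^ 1 * (B * (d + s)) + s ^ 2 * (1 * (q - 2) * B))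
              - q * (1 * (B * (d + s) * (d + s)) + s * (1 * (q - 1) * (B * (d + s))))
            = q * (q - 1) * B * (s * (d + s) + (q - 2) * s ^ 2) := by ring
        rw [hrw]
        have h1 : (0:ℝ) ≤ s * (d + s) + (q - 2) * s ^ 2 := by nlinarith
        have h2 : (0:ℝ) ≤ q * (q - 1) * B :=
          mul_nonneg (mul_nonneg (by linarith) (by linarith)) hB
        exact mul_nonneg h2 h1
    intro s hs r hr hsr
    exact hmono hs hr hsr
  have h0 : p 0 = d ^ q := by
    simp [hp]
  have hkey := key 0 (by simp) t ht ht
  rw [h0] at hkey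
  exact hkey

lemma auxBern (q d t : ℝ) (hq : 2 ≤ q) (hd : 0 < d) (ht : 0 < t) :
    (d + t + (q - 1) * t) * d ^ q < d * (d + t) ^ q := by
  have hs : 0 < t / d := div_pos ht hd
  have h := one_add_mul_self_lt_rpow_one_add (s := t / d) (by linarith) hs.ne' (p := q)
      (by linarith)
  have h1s : 1 + t / d = (d + t) / d := by field_simp
  rw [h1s, Real.div_rpow (by linarith) hd.le] at h
  have hdq : (0:ℝ) < d ^ q := rpow_pos_of_pos hd q
  have h2 : (1 + q * (t / d)) * d ^ q < (d + t) ^ q := by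
    rw [← lt_div_iff₀ hdq]; exact h
  have h3 := mul_lt_mul_of_pos_left h2 hd
  have h5 : t / d * d = t := div_mul_cancel₀ t hd.ne'
  have h4 : d * ((1 + q * (t / d)) * d ^ q) = (d + t + (q - 1) * t) * d ^ q := by
    linear_combination (q * d ^ q) * h5
  linarith [h3, h4.ge, h4.le]

lemma auxSlope (q ρ : ℝ) (hq : 2 ≤ q) (hρ0 : 0 < ρ) (hρ1 : ρ < 1) :
    ∀ u₁ u₂ : ℝ, 0 < u₁ → u₁ < u₂ →
      Real.log ((1 - ρ + ρ * Real.exp u₁) ^ q + (1 - ρ) ^ q * (Real.exp u₁ - 1)) * u₂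
        < Real.log ((1 - ρ + ρ * Real.exp u₂) ^ q + (1 - ρ) ^ q * (Real.exp u₂ - 1)) * u₁ := by
  intro u₁ u₂ hu1 hu12
  have hu2 : 0 < u₂ := lt_trans hu1 hu12
  have hd : 0 < 1 - ρ := by linarith
  have hq0 : (0:ℝ) < q := by linarith
  have hq1 : (1:ℝ) ≤ q := by linarith
  have hcpos : 0 < (1 - ρ) ^ q := rpow_pos_of_pos hd q
  have hapos : ∀ u : ℝ, 0 < 1 - ρ + ρ * Real.exp u := fun u =>
    add_pos hd (mul_pos hρ0 (Real.exp_pos u))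
  set F : ℝ → ℝ := fun u =>
    Real.log ((1 - ρ + ρ * Real.exp u) ^ q + (1 - ρ) ^ q * (Real.exp u - 1)) with hF
  have hNpos : ∀ u : ℝ,
      0 < (1 - ρ + ρ * Real.exp u) ^ q + (1 - ρ) ^ q * (Real.exp u - 1) := by
    intro u
    have h1 : (1 - ρ) ^ q < (1 - ρ + ρ * Real.exp u) ^ q :=
      rpow_lt_rpow hd.le (by nlinarith [Real.exp_pos u]) hq0
    nlinarith [mul_pos hcpos (Real.exp_pos u)]
  -- first derivative of the inner function
  have hb : ∀ u : ℝ, HasDerivAt (fun u : ℝ => 1 - ρ + ρ * Real.exp u) (ρ * Real.exp u) u :=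
    fun u => ((Real.hasDerivAt_exp u).const_mul ρ).const_add (1 - ρ)
  have hN1 : ∀ u : ℝ, HasDerivAt
      (fun u : ℝ => (1 - ρ + ρ * Real.exp u) ^ q + (1 - ρ) ^ q * (Real.exp u - 1))
      (ρ * Real.exp u * q * (1 - ρ + ρ * Real.exp u) ^ (q - 1) + (1 - ρ) ^ q * Real.exp u)
      u := by
    intro u
    have h1 := (hb u).rpow_const (p := q) (Or.inl (hapos u).ne')
    have h2 : HasDerivAt (fun u : ℝ => (1 - ρ) ^ q * (Real.exp u - 1))
        ((1 - ρ) ^ q * Real.exp u) u :=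
      ((Real.hasDerivAt_exp u).sub_const 1).const_mul _
    exact h1.add h2
  -- second derivative
  have hN2 : ∀ u : ℝ, HasDerivAt
      (fun u : ℝ => ρ * Real.exp u * q * (1 - ρ + ρ * Real.exp u) ^ (q - 1)
        + (1 - ρ) ^ q * Real.exp u)
      (ρ * Real.exp u * q * (1 - ρ + ρ * Real.exp u) ^ (q - 1)
        + ρ * Real.exp u * q * (ρ * Real.exp u * (q - 1) * (1 - ρ + ρ * Real.exp u) ^ (q - 1 - 1))
        + (1 - ρ) ^ q * Real.exp u) u := by
    intro u
    have hg1 : HasDerivAt (fun u : ℝ => ρ * Real.exp u * q) (ρ * Real.exp u * q) u :=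
      ((Real.hasDerivAt_exp u).const_mul ρ).mul_const q
    have hg2 := (hb u).rpow_const (p := q - 1) (Or.inl (hapos u).ne')
    have hmul := hg1.mul hg2
    have h2 : HasDerivAt (fun u : ℝ => (1 - ρ) ^ q * Real.exp u) ((1 - ρ) ^ q * Real.exp u) u :=
      (Real.hasDerivAt_exp u).const_mul _
    exact hmul.add h2
  have hF' : ∀ u : ℝ, HasDerivAt F
      ((ρ * Real.exp u * q * (1 - ρ + ρ * Real.exp u) ^ (q - 1) + (1 - ρ) ^ q * Real.exp u)
        / ((1 - ρ + ρ * Real.exp u) ^ q + (1 - ρ) ^ q * (Real.exp u - 1))) u :=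
    fun u => (hN1 u).log (hNpos u).ne'
  have hderivF : deriv F = fun u =>
      (ρ * Real.exp u * q * (1 - ρ + ρ * Real.exp u) ^ (q - 1) + (1 - ρ) ^ q * Real.exp u)
        / ((1 - ρ + ρ * Real.exp u) ^ q + (1 - ρ) ^ q * (Real.exp u - 1)) :=
    funext fun u => (hF' u).deriv
  -- key positivity of the second-derivative numerator
  have key : ∀ x : ℝ, 0 < x →
      0 < (ρ * Real.exp x * q * (1 - ρ + ρ * Real.exp x) ^ (q - 1)
              + ρ * Real.exp x * q *
                  (ρ * Real.exp x * (q - 1) * (1 - ρ + ρ * Real.exp x) ^ (q - 1 - 1))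
              + (1 - ρ) ^ q * Real.exp x)
            * ((1 - ρ + ρ * Real.exp x) ^ q + (1 - ρ) ^ q * (Real.exp x - 1))
          - (ρ * Real.exp x * q * (1 - ρ + ρ * Real.exp x) ^ (q - 1) + (1 - ρ) ^ q * Real.exp x)
            * (ρ * Real.exp x * q * (1 - ρ + ρ * Real.exp x) ^ (q - 1)
                + (1 - ρ) ^ q * Real.exp x) := by
    intro x hx
    have hE : 1 < Real.exp x := by
      calc (1:ℝ) = Real.exp 0 := Real.exp_zero.symm
      _ < Real.exp x := Real.exp_lt_exp.mpr hx
    have ht : 0 < ρ * Real.exp x := mul_pos hρ0 (by linarith)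
    have ha : 0 < 1 - ρ + ρ * Real.exp x := hapos x
    obtain ⟨e, he⟩ : ∃ e, q - 1 - 1 = e := ⟨_, rfl⟩
    have hK : 0 < (1 - ρ + ρ * Real.exp x) ^ e := rpow_pos_of_pos ha e
    have f1 : (1 - ρ + ρ * Real.exp x) ^ (q - 1)
        = (1 - ρ + ρ * Real.exp x) ^ e * (1 - ρ + ρ * Real.exp x) := by
      rw [show q - 1 = e + 1 by rw [← he]; ring, rpow_add ha, rpow_one]
    have f2 : (1 - ρ + ρ * Real.exp x) ^ q
        = (1 - ρ + ρ * Real.exp x) ^ e * (1 - ρ + ρ * Real.exp x) * (1 - ρ + ρ * Real.exp x) := by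
      rw [show q = e + 1 + 1 by rw [← he]; ring, rpow_add ha, rpow_add ha, rpow_one]
    -- Bernoulli ingredient
    have hBern := auxBern q (1 - ρ) (ρ * Real.exp x) hq hd ht
    -- Taylor ingredient
    have hP := auxP q (1 - ρ) hq hd (t := ρ * Real.exp x) ht.le
    rw [show (1 - ρ) + ρ * Real.exp x = 1 - ρ + ρ * Real.exp x from rfl] at hBern hP
    have hq2 : (1 - ρ + ρ * Real.exp x) ^ (q - 2)
        = (1 - ρ + ρ * Real.exp x) ^ e := by
      rw [← he]; rw [show q - 2 = q - 1 - 1 by ring]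
    rw [f2] at hBern
    rw [f1, f2, hq2] at hP
    rw [he, f1, f2]
    have identity :
        (ρ * Real.exp x * q * ((1 - ρ + ρ * Real.exp x) ^ e * (1 - ρ + ρ * Real.exp x))
            + ρ * Real.exp x * q *
                (ρ * Real.exp x * (q - 1) * (1 - ρ + ρ * Real.exp x) ^ e)
            + (1 - ρ) ^ q * Real.exp x)
          * ((1 - ρ + ρ * Real.exp x) ^ e * (1 - ρ + ρ * Real.exp x) * (1 - ρ + ρ * Real.exp x)
              + (1 - ρ) ^ q * (Real.exp x - 1))
        - (ρ * Real.exp x * q * ((1 - ρ + ρ * Real.exp x) ^ e * (1 - ρ + ρ * Real.exp x))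
            + (1 - ρ) ^ q * Real.exp x)
          * (ρ * Real.exp x * q * ((1 - ρ + ρ * Real.exp x) ^ e * (1 - ρ + ρ * Real.exp x))
              + (1 - ρ) ^ q * Real.exp x)
        = q * (ρ * Real.exp x) * (1 - ρ + ρ * Real.exp x) ^ e
            * ((1 - ρ) * ((1 - ρ + ρ * Real.exp x) ^ e * (1 - ρ + ρ * Real.exp x)
                  * (1 - ρ + ρ * Real.exp x))
              - (1 - ρ + ρ * Real.exp x + (q - 1) * (ρ * Real.exp x)) * (1 - ρ) ^ q)
          + (1 - ρ) ^ q * Real.exp x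
            * (((1 - ρ + ρ * Real.exp x) ^ e * (1 - ρ + ρ * Real.exp x) * (1 - ρ + ρ * Real.exp x)
                  + q * (q - 1) * ((ρ * Real.exp x) ^ 2 * (1 - ρ + ρ * Real.exp x) ^ e)
                  - q * (ρ * Real.exp x * ((1 - ρ + ρ * Real.exp x) ^ e * (1 - ρ + ρ * Real.exp x))))
              - (1 - ρ) ^ q) := by
      ring
    rw [identity]
    have h1 : 0 < q * (ρ * Real.exp x) * (1 - ρ + ρ * Real.exp x) ^ e
        * ((1 - ρ) * ((1 - ρ + ρ * Real.exp x) ^ e * (1 - ρ + ρ * Real.exp x)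
              * (1 - ρ + ρ * Real.exp x))
          - (1 - ρ + ρ * Real.exp x + (q - 1) * (ρ * Real.exp x)) * (1 - ρ) ^ q) :=
      mul_pos (mul_pos (mul_pos hq0 ht) hK) (by linarith)
    have h2 : 0 ≤ (1 - ρ) ^ q * Real.exp x
        * (((1 - ρ + ρ * Real.exp x) ^ e * (1 - ρ + ρ * Real.exp x) * (1 - ρ + ρ * Real.exp x)
              + q * (q - 1) * ((ρ * Real.exp x) ^ 2 * (1 - ρ + ρ * Real.exp x) ^ e)
              - q * (ρ * Real.exp x * ((1 - ρ + ρ * Real.exp x) ^ e * (1 - ρ + ρ * Real.exp x))))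
          - (1 - ρ) ^ q) :=
      mul_nonneg (mul_nonneg hcpos.le (Real.exp_pos x).le) (by linarith)
    linarith
  -- F is strictly convex on [0, ∞)
  have hconv : StrictConvexOn ℝ (Set.Ici (0:ℝ)) F := by
    apply strictConvexOn_of_deriv2_pos (convex_Ici 0)
    · exact fun u _ => (hF' u).continuousAt.continuousWithinAt
    · intro x hx
      rw [interior_Ici] at hx
      have h2 : deriv (deriv F) x
          = ((ρ * Real.exp x * q * (1 - ρ + ρ * Real.exp x) ^ (q - 1)
                + ρ * Real.exp x * q *
                    (ρ * Real.exp x * (q - 1) * (1 - ρ + ρ * Real.exp x) ^ (q - 1 - 1))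
                + (1 - ρ) ^ q * Real.exp x)
              * ((1 - ρ + ρ * Real.exp x) ^ q + (1 - ρ) ^ q * (Real.exp x - 1))
            - (ρ * Real.exp x * q * (1 - ρ + ρ * Real.exp x) ^ (q - 1) + (1 - ρ) ^ q * Real.exp x)
              * (ρ * Real.exp x * q * (1 - ρ + ρ * Real.exp x) ^ (q - 1)
                  + (1 - ρ) ^ q * Real.exp x))
            / ((1 - ρ + ρ * Real.exp x) ^ q + (1 - ρ) ^ q * (Real.exp x - 1)) ^ 2 := by
        rw [hderivF]
        exact ((hN2 x).div (hN1 x) (hNpos x).ne').deriv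
      have : deriv^[2] F x = deriv (deriv F) x := rfl
      rw [this, h2]
      exact div_pos (key x hx) (pow_pos (hNpos x) 2)
  -- F 0 = 0
  have hF0 : F 0 = 0 := by
    have h1 : 1 - ρ + ρ * Real.exp 0 = 1 := by rw [Real.exp_zero]; ring
    have h2 : Real.exp 0 - 1 = 0 := by rw [Real.exp_zero]; ring
    rw [hF]
    simp only [h1, h2, Real.one_rpow, mul_zero, add_zero, Real.log_one]
  -- slope inequality from strict convexity
  have hb0 : 0 < u₁ / u₂ := div_pos hu1 hu2
  have hb1 : u₁ / u₂ < 1 := (div_lt_one hu2).2 hu12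
  have hcomb := hconv.2 (Set.self_mem_Ici) (Set.mem_Ici.2 hu2.le) (ne_of_lt hu2)
      (show 0 < 1 - u₁ / u₂ by linarith) hb0 (by ring)
  have harg : (1 - u₁ / u₂) • (0:ℝ) + (u₁ / u₂) • u₂ = u₁ := by
    simp only [smul_eq_mul, mul_zero, zero_add]
    field_simp
  rw [harg, hF0] at hcomb
  simp only [smul_eq_mul, mul_zero, zero_add] at hcomb
  -- hcomb : F u₁ < u₁ / u₂ * F u₂
  have hmul := mul_lt_mul_of_pos_right hcomb hu2
  have heq : u₁ / u₂ * F u₂ * u₂ = F u₂ * u₁ := by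
    field_simp
  rw [heq] at hmul
  exact hmul

lemma Rq_form (q ρ x : ℝ) (hq : 2 ≤ q) (hρ0 : 0 < ρ) (hρ1 : ρ < 1) (hx : 0 < x) :
    Rq q ρ x (1 / x)
      = (Real.log ((1 + ρ * x) ^ q + (1 - ρ) ^ q * x) - Real.log (1 + x))
        / ((q - 1) * Real.log (1 + x)) := by
  have hx1 : (0:ℝ) < 1 + x := by linarith
  have hxne : x ≠ 0 := hx.ne'
  have hd : (0:ℝ) < 1 - ρ := by linarith
  have hy1 : 1 / x + 1 ≠ 0 := by positivity
  have e1 : (1 / x) / (1 / x + 1) = 1 / (1 + x) := by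
    field_simp
  have e2 : 1 / (1 / x + 1) = x / (1 + x) := by
    field_simp
  have e3 : 1 - ρ * (1 / x) * x = 1 - ρ := by
    field_simp
  have e3' : 1 - 1 * (1 / x) * x = 0 := by
    field_simp
    ring
  have hNρ : Nq q ρ x (1 / x) = ((1 + ρ * x) ^ q + (1 - ρ) ^ q * x) / (1 + x) := by
    rw [Nq, e1, e2, e3]
    field_simp
  have hN1 : Nq q 1 x (1 / x) = (1 + x) ^ (q - 1) := by
    rw [Nq, e1, e2, e3', Real.zero_rpow (by linarith : q ≠ 0), mul_zero, add_zero,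
      one_mul, Real.rpow_sub hx1, Real.rpow_one]
    ring
  have hnum : (0:ℝ) < (1 + ρ * x) ^ q + (1 - ρ) ^ q * x := by
    have h1 : (0:ℝ) < (1 + ρ * x) ^ q := rpow_pos_of_pos (by nlinarith) q
    have h2 : (0:ℝ) < (1 - ρ) ^ q * x := mul_pos (rpow_pos_of_pos hd q) hx
    linarith
  rw [Rq, hNρ, hN1, Real.log_div hnum.ne' hx1.ne', Real.log_rpow hx1]

theorem stmt13 (q ρ : ℝ) (hq : 2 ≤ q) (hρ0 : 0 < ρ) (hρ1 : ρ < 1) :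
    ∀ x₁ x₂ : ℝ, 0 < x₁ → x₁ < x₂ →
      Rq q ρ x₁ (1 / x₁) < Rq q ρ x₂ (1 / x₂) := by
  intro x₁ x₂ hx1 hlt
  have hx2 : 0 < x₂ := lt_trans hx1 hlt
  have h11 : (0:ℝ) < 1 + x₁ := by linarith
  have h12 : (0:ℝ) < 1 + x₂ := by linarith
  have hu1 : 0 < Real.log (1 + x₁) := Real.log_pos (by linarith)
  have hu2 : 0 < Real.log (1 + x₂) := Real.log_pos (by linarith)
  have hu12 : Real.log (1 + x₁) < Real.log (1 + x₂) :=
    Real.log_lt_log h11 (by linarith)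
  have hkey := auxSlope q ρ hq hρ0 hρ1 (Real.log (1 + x₁)) (Real.log (1 + x₂)) hu1 hu12
  have he1 : Real.exp (Real.log (1 + x₁)) = 1 + x₁ := Real.exp_log h11
  have he2 : Real.exp (Real.log (1 + x₂)) = 1 + x₂ := Real.exp_log h12
  have g1 : 1 - ρ + ρ * Real.exp (Real.log (1 + x₁)) = 1 + ρ * x₁ := by rw [he1]; ring
  have g2 : Real.exp (Real.log (1 + x₁)) - 1 = x₁ := by rw [he1]; ring
  have g3 : 1 - ρ + ρ * Real.exp (Real.log (1 + x₂)) = 1 + ρ * x₂ := by rw [he2]; ring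
  have g4 : Real.exp (Real.log (1 + x₂)) - 1 = x₂ := by rw [he2]; ring
  rw [g1, g2, g3, g4] at hkey
  -- hkey : log ((1+ρx₁)^q + (1-ρ)^q x₁) * log (1+x₂) < log ((1+ρx₂)^q + (1-ρ)^q x₂) * log (1+x₁)
  rw [Rq_form q ρ x₁ hq hρ0 hρ1 hx1, Rq_form q ρ x₂ hq hρ0 hρ1 hx2]
  rw [div_lt_div_iff₀ (by nlinarith) (by nlinarith)]
  nlinarith [mul_lt_mul_of_pos_left hkey (show (0:ℝ) < q - 1 by linarith),
    mul_pos hu1 hu2]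
end
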